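/- (Gowers–Cauchy–Schwarz in two dimensions) For finite nonempty sets X, Y and functions f_{00}, f_{01}, f_{10}, f_{11} : X × Y → ℝ, one has |E_{x,x' ∈ X, y,y' ∈ Y} f_{00}(x,y) f_{01}(x,y') f_{10}(x',y) f_{11}(x',y')| ≤ ‖f_{00}‖_□ · ‖f_{01}‖_□ · ‖f_{10}‖_□ · ‖f_{11}‖_□, where ‖f‖_□ = (E_{x,x',y,y'} f(x,y)f(x,y')f(x',y)f(x',y'))^{1/4}. -/

import Mathlib

open Finset

/-- The two-dimensional Gowers box norm
`‖f‖_□ = (E_{x,x',y,y'} f(x,y)f(x,y')f(x',y)f(x',y'))^{1/4}`. -/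
noncomputable def boxNorm {X Y : Type*} [Fintype X] [Fintype Y] (f : X → Y → ℝ) : ℝ :=
  ((∑ x, ∑ x', ∑ y, ∑ y', f x y * f x y' * f x' y * f x' y') /
      ((Fintype.card X : ℝ) ^ 2 * (Fintype.card Y : ℝ) ^ 2)) ^ ((1 : ℝ) / 4)

section aux

variable {X Y : Type*} [Fintype X] [Fintype Y]

private lemma sum4_comm (g : X → X → Y → Y → ℝ) :
    ∑ x, ∑ x', ∑ y, ∑ y', g x x' y y' = ∑ y, ∑ y', ∑ x, ∑ x', g x x' y y' := by
  calc ∑ x, ∑ x', ∑ y, ∑ y', g x x' y y'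
      = ∑ x, ∑ y, ∑ x', ∑ y', g x x' y y' :=
        Finset.sum_congr rfl fun x _ => Finset.sum_comm
    _ = ∑ y, ∑ x, ∑ x', ∑ y', g x x' y y' := Finset.sum_comm
    _ = ∑ y, ∑ x, ∑ y', ∑ x', g x x' y y' :=
        Finset.sum_congr rfl fun y _ => Finset.sum_congr rfl fun x _ => Finset.sum_comm
    _ = ∑ y, ∑ y', ∑ x, ∑ x', g x x' y y' :=
        Finset.sum_congr rfl fun y _ => Finset.sum_comm

private lemma box4_eq (f : X → Y → ℝ) :
    (∑ x, ∑ x', ∑ y, ∑ y', f x y * f x y' * f x' y * f x' y') =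
      ∑ x, ∑ x', (∑ y, f x y * f x' y) ^ 2 := by
  refine Finset.sum_congr rfl fun x _ => Finset.sum_congr rfl fun x' _ => ?_
  rw [sq, Finset.sum_mul_sum]
  exact Finset.sum_congr rfl fun y _ => Finset.sum_congr rfl fun y' _ => by ring

private lemma box4_nonneg (f : X → Y → ℝ) :
    0 ≤ ∑ x, ∑ x', ∑ y, ∑ y', f x y * f x y' * f x' y * f x' y' := by
  rw [box4_eq]
  positivity

private lemma le_rpow_quarter {t c₀ c₁ c₂ c₃ : ℝ} (ht : 0 ≤ t) (hc₀ : 0 ≤ c₀)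
    (hc₁ : 0 ≤ c₁) (hc₂ : 0 ≤ c₂) (hc₃ : 0 ≤ c₃) (h : t ^ 4 ≤ c₀ * c₁ * c₂ * c₃) :
    t ≤ c₀ ^ ((1 : ℝ) / 4) * c₁ ^ ((1 : ℝ) / 4) * c₂ ^ ((1 : ℝ) / 4) * c₃ ^ ((1 : ℝ) / 4) := by
  have h1 : t = (t ^ (4 : ℕ) : ℝ) ^ ((1 : ℝ) / 4) := by
    rw [← Real.rpow_natCast t 4, ← Real.rpow_mul ht]
    norm_num
  have h2 : (t ^ (4 : ℕ) : ℝ) ^ ((1 : ℝ) / 4) ≤ (c₀ * c₁ * c₂ * c₃) ^ ((1 : ℝ) / 4) :=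
    Real.rpow_le_rpow (by positivity) h (by norm_num)
  have h3 : (c₀ * c₁ * c₂ * c₃) ^ ((1 : ℝ) / 4) =
      c₀ ^ ((1 : ℝ) / 4) * c₁ ^ ((1 : ℝ) / 4) * c₂ ^ ((1 : ℝ) / 4) * c₃ ^ ((1 : ℝ) / 4) := by
    rw [Real.mul_rpow (by positivity) hc₃, Real.mul_rpow (by positivity) hc₂,
      Real.mul_rpow hc₀ hc₁]
  rw [h1]
  rw [h3] at h2
  exact h2

end aux

/-- Gowers–Cauchy–Schwarz inequality in two dimensions. -/
theorem gowers_cauchy_schwarz_2d {X Y : Type*} [Fintype X] [Fintype Y]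
    [Nonempty X] [Nonempty Y] (f₀₀ f₀₁ f₁₀ f₁₁ : X → Y → ℝ) :
    |(∑ x, ∑ x', ∑ y, ∑ y', f₀₀ x y * f₀₁ x y' * f₁₀ x' y * f₁₁ x' y') /
        ((Fintype.card X : ℝ) ^ 2 * (Fintype.card Y : ℝ) ^ 2)| ≤
      boxNorm f₀₀ * boxNorm f₀₁ * boxNorm f₁₀ * boxNorm f₁₁ := by
  set D : ℝ := (Fintype.card X : ℝ) ^ 2 * (Fintype.card Y : ℝ) ^ 2 with hDdef
  have hD : 0 < D := by
    have hX : 0 < (Fintype.card X : ℝ) := by positivity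
    positivity
  set S : ℝ := ∑ x, ∑ x', ∑ y, ∑ y', f₀₀ x y * f₀₁ x y' * f₁₀ x' y * f₁₁ x' y' with hSdef
  set B₀₀ : ℝ := ∑ x, ∑ x', ∑ y, ∑ y', f₀₀ x y * f₀₀ x y' * f₀₀ x' y * f₀₀ x' y' with hB00
  set B₀₁ : ℝ := ∑ x, ∑ x', ∑ y, ∑ y', f₀₁ x y * f₀₁ x y' * f₀₁ x' y * f₀₁ x' y' with hB01
  set B₁₀ : ℝ := ∑ x, ∑ x', ∑ y, ∑ y', f₁₀ x y * f₁₀ x y' * f₁₀ x' y * f₁₀ x' y' with hB10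
  set B₁₁ : ℝ := ∑ x, ∑ x', ∑ y, ∑ y', f₁₁ x y * f₁₁ x y' * f₁₁ x' y * f₁₁ x' y' with hB11
  set A₀ : ℝ := ∑ y, ∑ y', (∑ x, f₀₀ x y * f₀₁ x y') ^ 2 with hA0
  set A₁ : ℝ := ∑ y, ∑ y', (∑ x, f₁₀ x y * f₁₁ x y') ^ 2 with hA1
  -- Step 1: S² ≤ A₀ * A₁
  have hS : S = ∑ y, ∑ y', (∑ x, f₀₀ x y * f₀₁ x y') * (∑ x', f₁₀ x' y * f₁₁ x' y') := by
    rw [hSdef, sum4_comm]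
    refine Finset.sum_congr rfl fun y _ => Finset.sum_congr rfl fun y' _ => ?_
    rw [Finset.sum_mul_sum]
    exact Finset.sum_congr rfl fun x _ => Finset.sum_congr rfl fun x' _ => by ring
  have h1 : S ^ 2 ≤ A₀ * A₁ := by
    calc S ^ 2
        = (∑ p : Y × Y, (∑ x, f₀₀ x p.1 * f₀₁ x p.2) * (∑ x', f₁₀ x' p.1 * f₁₁ x' p.2)) ^ 2 := by
          rw [hS, Fintype.sum_prod_type]
      _ ≤ (∑ p : Y × Y, (∑ x, f₀₀ x p.1 * f₀₁ x p.2) ^ 2) *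
            (∑ p : Y × Y, (∑ x', f₁₀ x' p.1 * f₁₁ x' p.2) ^ 2) :=
          Finset.sum_mul_sq_le_sq_mul_sq _ _ _
      _ = A₀ * A₁ := by rw [hA0, hA1, Fintype.sum_prod_type, Fintype.sum_prod_type]
  -- Step 2: A₀² ≤ B₀₀ * B₀₁ and A₁² ≤ B₁₀ * B₁₁
  have key : ∀ f g : X → Y → ℝ,
      (∑ y, ∑ y', (∑ x, f x y * g x y') ^ 2) ^ 2 ≤
        (∑ x, ∑ x', ∑ y, ∑ y', f x y * f x y' * f x' y * f x' y') *
          (∑ x, ∑ x', ∑ y, ∑ y', g x y * g x y' * g x' y * g x' y') := by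
    intro f g
    have hexp : (∑ y, ∑ y', (∑ x, f x y * g x y') ^ 2) =
        ∑ x, ∑ x', (∑ y, f x y * f x' y) * (∑ y', g x y' * g x' y') := by
      calc ∑ y, ∑ y', (∑ x, f x y * g x y') ^ 2
          = ∑ y, ∑ y', ∑ x, ∑ x', (f x y * g x y') * (f x' y * g x' y') := by
            refine Finset.sum_congr rfl fun y _ => Finset.sum_congr rfl fun y' _ => ?_
            rw [sq, Finset.sum_mul_sum]
        _ = ∑ x, ∑ x', ∑ y, ∑ y', (f x y * g x y') * (f x' y * g x' y') :=
            (sum4_comm _).symm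
        _ = ∑ x, ∑ x', (∑ y, f x y * f x' y) * (∑ y', g x y' * g x' y') := by
            refine Finset.sum_congr rfl fun x _ => Finset.sum_congr rfl fun x' _ => ?_
            rw [Finset.sum_mul_sum]
            exact Finset.sum_congr rfl fun y _ => Finset.sum_congr rfl fun y' _ => by ring
    calc (∑ y, ∑ y', (∑ x, f x y * g x y') ^ 2) ^ 2
        = (∑ p : X × X, (∑ y, f p.1 y * f p.2 y) * (∑ y', g p.1 y' * g p.2 y')) ^ 2 := by
          rw [hexp, Fintype.sum_prod_type]
      _ ≤ (∑ p : X × X, (∑ y, f p.1 y * f p.2 y) ^ 2) *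
            (∑ p : X × X, (∑ y', g p.1 y' * g p.2 y') ^ 2) :=
          Finset.sum_mul_sq_le_sq_mul_sq _ _ _
      _ = _ := by rw [box4_eq f, box4_eq g, Fintype.sum_prod_type, Fintype.sum_prod_type]
  have h2 : A₀ ^ 2 ≤ B₀₀ * B₀₁ := key f₀₀ f₀₁
  have h3 : A₁ ^ 2 ≤ B₁₀ * B₁₁ := key f₁₀ f₁₁
  -- Step 3: S⁴ ≤ B₀₀ B₀₁ B₁₀ B₁₁
  have hA0nn : 0 ≤ A₀ := by positivity
  have hA1nn : 0 ≤ A₁ := by positivity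
  have h4 : S ^ 4 ≤ B₀₀ * B₀₁ * (B₁₀ * B₁₁) := by
    have : S ^ 4 = (S ^ 2) ^ 2 := by ring
    rw [this]
    calc (S ^ 2) ^ 2 ≤ (A₀ * A₁) ^ 2 := pow_le_pow_left₀ (sq_nonneg S) h1 2
      _ = A₀ ^ 2 * A₁ ^ 2 := by ring
      _ ≤ B₀₀ * B₀₁ * (B₁₀ * B₁₁) :=
          mul_le_mul h2 h3 (sq_nonneg A₁) (mul_nonneg (box4_nonneg f₀₀) (box4_nonneg f₀₁))
  -- Step 4: conclude via fourth roots
  have hB00nn := box4_nonneg f₀₀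
  have hB01nn := box4_nonneg f₀₁
  have hB10nn := box4_nonneg f₁₀
  have hB11nn := box4_nonneg f₁₁
  set c₀ : ℝ := B₀₀ / D
  set c₁ : ℝ := B₀₁ / D
  set c₂ : ℝ := B₁₀ / D
  set c₃ : ℝ := B₁₁ / D
  have hc₀ : 0 ≤ c₀ := div_nonneg hB00nn hD.le
  have hc₁ : 0 ≤ c₁ := div_nonneg hB01nn hD.le
  have hc₂ : 0 ≤ c₂ := div_nonneg hB10nn hD.le
  have hc₃ : 0 ≤ c₃ := div_nonneg hB11nn hD.le
  have hkey : |S / D| ^ 4 ≤ c₀ * c₁ * c₂ * c₃ := by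
    have h5 : |S / D| ^ 4 = S ^ 4 / D ^ 4 := by
      rw [← abs_pow, show (S / D) ^ 4 = ((S / D) ^ 2) ^ 2 from by ring,
        abs_of_nonneg (sq_nonneg _)]
      rw [div_pow, div_pow, ← pow_mul, ← pow_mul]
    rw [h5]
    have h6 : c₀ * c₁ * c₂ * c₃ = B₀₀ * B₀₁ * (B₁₀ * B₁₁) / D ^ 4 := by
      simp only [c₀, c₁, c₂, c₃, div_mul_div_comm]
      congr 1 <;> ring
    rw [h6]
    exact div_le_div_of_nonneg_right h4 (by positivity)
  have habs : 0 ≤ |S / D| := abs_nonneg _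
  have := le_rpow_quarter habs hc₀ hc₁ hc₂ hc₃ hkey
  calc |S / D| ≤ c₀ ^ ((1:ℝ)/4) * c₁ ^ ((1:ℝ)/4) * c₂ ^ ((1:ℝ)/4) * c₃ ^ ((1:ℝ)/4) := this
    _ = boxNorm f₀₀ * boxNorm f₀₁ * boxNorm f₁₀ * boxNorm f₁₁ := rfl
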